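/- arXiv:2602.03995 — 11 statements merged into one kernel-verified Lean document; each statement's English description precedes it below -/
import Mathlib

section
/- Let h ≥ 0 and let r_HH, r_HL, r_LH, r_LL be real numbers with r_HH ≥ r_HL ≥ r_LL, r_HH ≥ r_LH ≥ r_LL, and r_HH + r_LL ≥ r_HL + r_LH. Suppose V : ℕ × ℕ → ℝ satisfies, for all x, y ∈ ℕ: (i) V(x+1,y) − V(x,y) ≤ r_HH + h; (ii) V(x,y+1) − V(x,y) ≤ r_LL + h; (iii) r_HL − r_LL ≤ V(x+1,y) − V(x,y+1) ≤ r_HH − r_LH. Then for all x ≥ 1 and y ≥ 1: (a) r_HH + h + V(x−1,y) ≥ V(x,y); (b) r_LH + h + V(x,y−1) ≥ V(x,y); (c) r_HH + h + V(x−1,y) ≥ r_LH + h + V(x,y−1); (d) r_LL + h + V(x,y−1) ≥ V(x,y); (e) r_LL + h + V(x,y−1) ≥ r_HL + h + V(x−1,y). (Consequently, when an H-type demand arrives it is optimal to match her with an H-type supply if available and otherwise with an L-type supply, and when an L-type demand arrives it is optimal to match her with an L-type supply if available rather than with an H-type supply or not at all.) -/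
/-- Greedy part of the optimal centralized matching policy: comparisons of
continuation values showing that an arriving H-type demand agent should be
matched with an H-type supply if available (else an L-type supply), and an
arriving L-type demand agent should be matched with an L-type supply if
available rather than with an H-type supply or not at all. -/
theorem greedy_matching_comparisons
    (h rHH rHL rLH rLL : ℝ) (hh : 0 ≤ h)
    (h1 : rHH ≥ rHL) (h2 : rHL ≥ rLL) (h3 : rHH ≥ rLH) (h4 : rLH ≥ rLL)
    (h5 : rHH + rLL ≥ rHL + rLH)
    (V : ℕ × ℕ → ℝ)
    (hi : ∀ x y : ℕ, V (x + 1, y) - V (x, y) ≤ rHH + h)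
    (hii : ∀ x y : ℕ, V (x, y + 1) - V (x, y) ≤ rLL + h)
    (hiii : ∀ x y : ℕ, rHL - rLL ≤ V (x + 1, y) - V (x, y + 1) ∧
        V (x + 1, y) - V (x, y + 1) ≤ rHH - rLH) :
    ∀ x y : ℕ, 1 ≤ x → 1 ≤ y →
      (rHH + h + V (x - 1, y) ≥ V (x, y)) ∧
      (rLH + h + V (x, y - 1) ≥ V (x, y)) ∧
      (rHH + h + V (x - 1, y) ≥ rLH + h + V (x, y - 1)) ∧
      (rLL + h + V (x, y - 1) ≥ V (x, y)) ∧
      (rLL + h + V (x, y - 1) ≥ rHL + h + V (x - 1, y)) := by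
  rintro ⟨⟩ y hx hy
  · omega
  rename_i a
  rcases y with _ | b
  · omega
  simp only [Nat.add_sub_cancel]
  have g1 := hi a (b + 1)
  have g2 := hii (a + 1) b
  have g3 := hiii a b
  have g4 := (hiii a (b+1)).2
  have g5 := (hiii a b).1
  refine ⟨by linarith, ?_, ?_, by linarith, by linarith⟩ <;> linarith [g3.1, g3.2]
end

section
/- Let p, q ∈ (0,1) with δ := q(1−p)/(p(1−q)) ≠ 1, let k ≥ 1 be an integer, let r_HH, r_HL, r_LH, r_LL be real numbers, let r := r_HH + r_LL − r_HL − r_LH, and set φ(i) := (1−δ)·δ^i/(1−δ^{k+1}) for i = 0,…,k. Then φ(0)·(pq·r_HH + p(1−q)·r_HL + (1−p)q·r_HH + (1−p)(1−q)·r_LL) + ∑_{l=1}^{k−1} φ(l)·(pq·r_HH + p(1−q)·r_LL + (1−p)q·r_HH + (1−p)(1−q)·r_LL) + φ(k)·(pq·r_HH + p(1−q)·r_LL + (1−p)q·r_LH + (1−p)(1−q)·r_LL) = q·r_HH + (1−q)·r_LL + p(1−q)·(r_HH − r_LH)·(1−δ) − p(1−q)·r·(1−δ)/(1−δ^{k+1}).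 -/
/-- Long-run average matching revenue of the one-sided-backlog system under the
threshold-`k` policy: weighting per-state expected payoffs by the stationary
probabilities yields the closed-form revenue expression. -/
theorem average_revenue_identity
    (p q δ : ℝ) (hp : p ∈ Set.Ioo (0 : ℝ) 1) (hq : q ∈ Set.Ioo (0 : ℝ) 1)
    (hδ : δ = q * (1 - p) / (p * (1 - q))) (hδ1 : δ ≠ 1)
    (k : ℕ) (hk : 1 ≤ k)
    (rHH rHL rLH rLL r : ℝ) (hr : r = rHH + rLL - rHL - rLH)
    (φ : ℕ → ℝ) (hφ : ∀ i : ℕ, φ i = (1 - δ) * δ ^ i / (1 - δ ^ (k + 1))) :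
    φ 0 * (p * q * rHH + p * (1 - q) * rHL + (1 - p) * q * rHH
        + (1 - p) * (1 - q) * rLL)
      + (∑ l ∈ Finset.Icc 1 (k - 1),
          φ l * (p * q * rHH + p * (1 - q) * rLL + (1 - p) * q * rHH
            + (1 - p) * (1 - q) * rLL))
      + φ k * (p * q * rHH + p * (1 - q) * rLL + (1 - p) * q * rLH
        + (1 - p) * (1 - q) * rLL)
    = q * rHH + (1 - q) * rLL + p * (1 - q) * (rHH - rLH) * (1 - δ)
      - p * (1 - q) * r * (1 - δ) / (1 - δ ^ (k + 1)) := by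
  obtain ⟨hp0, hp1⟩ := hp
  obtain ⟨hq0, hq1⟩ := hq
  have h1q : (0:ℝ) < 1 - q := by linarith
  have h1p : (0:ℝ) < 1 - p := by linarith
  have hpq : p * (1 - q) ≠ 0 := by positivity
  have hδ0 : 0 < δ := by
    rw [hδ]
    positivity
  -- the defining relation of δ, cleared of denominators
  have hδ' : (1 - p) * q = p * (1 - q) * δ := by
    rw [hδ]; field_simp
  have hd : (1 : ℝ) - δ ≠ 0 := sub_ne_zero.mpr (Ne.symm hδ1)
  have hD : (1 : ℝ) - δ ^ (k + 1) ≠ 0 := by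
    rcases lt_or_gt_of_ne hδ1 with h | h
    · have : δ ^ (k + 1) < 1 := pow_lt_one₀ hδ0.le h (Nat.succ_ne_zero k)
      exact sub_ne_zero.mpr (ne_of_gt (by linarith))
    · have : 1 < δ ^ (k + 1) := one_lt_pow₀ h (Nat.succ_ne_zero k)
      exact sub_ne_zero.mpr (ne_of_lt (by linarith))
  have hsum : ∑ l ∈ Finset.Icc 1 (k - 1), δ ^ l = (δ - δ ^ k) / (1 - δ) := by
    have h1 : Finset.Icc 1 (k - 1) = Finset.Ico 1 k := by
      rw [← Finset.Ico_add_one_right_eq_Icc, Nat.sub_add_cancel hk]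
    rw [h1, geom_sum_Ico' hδ1 hk, pow_one]
  have hB : ∑ l ∈ Finset.Icc 1 (k - 1),
      φ l * (p * q * rHH + p * (1 - q) * rLL + (1 - p) * q * rHH
        + (1 - p) * (1 - q) * rLL)
      = ((δ - δ ^ k) / (1 - δ)) * ((1 - δ) * (p * q * rHH + p * (1 - q) * rLL
        + p * (1 - q) * δ * rHH + (1 - p) * (1 - q) * rLL) / (1 - δ ^ (k + 1))) := by
    rw [← hsum, Finset.sum_mul]
    exact Finset.sum_congr rfl fun l _ => by rw [hφ, ← hδ']; ring
  have hq2 : q * rHH = p * q * rHH + p * (1 - q) * δ * rHH := by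
    rw [← hδ']; ring
  have hq3 : (1 - q) * rLL = p * (1 - q) * rLL + (1 - p) * (1 - q) * rLL := by ring
  rw [hφ 0, hφ k, hB, hq2, hq3, hr, hδ']
  have hδk : δ ^ (k + 1) = δ * δ ^ k := by ring
  rw [hδk] at hD ⊢
  field_simp
  ring
end

section
/- Let p ∈ (0,1), let h > 0, let r ≥ 0, let r_HH, r_LL ∈ ℝ, and set c := p(1−p)·r. For k ∈ ℕ define W(k) = p·r_HH + (1−p)·r_LL − c/(k+1) − k·h, and define k* := ⌊(−h + √(h² + 4hc))/(2h)⌋ (the floor of a nonnegative real, so k* ∈ ℕ). Then W(k) ≤ W(k*) for every k ∈ ℕ; that is, the threshold k* maximizes the long-run average social welfare of the centralized one-sided-backlog system in the symmetric case p = q. -/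
/-- In the symmetric case `p = q`, the threshold
`k* = ⌊(−h + √(h² + 4hc))/(2h)⌋` maximizes the long-run average social welfare
`W(k) = p·r_HH + (1−p)·r_LL − c/(k+1) − k·h` of the centralized
one-sided-backlog system, where `c = p(1−p)·r`. -/
theorem optimal_threshold_maximizes_welfare
    (p h r rHH rLL c : ℝ) (hp : p ∈ Set.Ioo (0 : ℝ) 1) (hh : 0 < h)
    (hr : 0 ≤ r) (hc : c = p * (1 - p) * r)
    (W : ℕ → ℝ)
    (hW : ∀ k : ℕ, W k = p * rHH + (1 - p) * rLL - c / (k + 1) - k * h)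
    (kstar : ℕ)
    (hks : kstar = ⌊(-h + Real.sqrt (h ^ 2 + 4 * h * c)) / (2 * h)⌋₊) :
    ∀ k : ℕ, W k ≤ W kstar := by
  obtain ⟨hp0, hp1⟩ := hp
  have hc0 : 0 ≤ c := by
    have : 0 ≤ p * (1 - p) := by nlinarith
    rw [hc]; positivity
  set x : ℝ := (-h + Real.sqrt (h ^ 2 + 4 * h * c)) / (2 * h) with hxdef
  have hsq : Real.sqrt (h ^ 2 + 4 * h * c) ^ 2 = h ^ 2 + 4 * h * c := by
    rw [Real.sq_sqrt]; positivity
  have hsnn : 0 ≤ Real.sqrt (h ^ 2 + 4 * h * c) := Real.sqrt_nonneg _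
  have hhs : h ≤ Real.sqrt (h ^ 2 + 4 * h * c) := by
    nlinarith [Real.sq_sqrt (by positivity : (0:ℝ) ≤ h ^ 2 + 4 * h * c)]
  have hx0 : 0 ≤ x := by
    rw [hxdef]
    apply div_nonneg (by linarith) (by linarith)
  have hxeq : h * x * (x + 1) = c := by
    rw [hxdef]
    field_simp
    nlinarith [hsq, Real.sq_sqrt (show (0:ℝ) ≤ h * (h + 4 * c) by positivity)]
  -- floor facts
  have hk_le_x : (kstar : ℝ) ≤ x := by
    rw [hks]; exact Nat.floor_le hx0
  have hx_lt : x < (kstar : ℝ) + 1 := by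
    rw [hks]; exact Nat.lt_floor_add_one x
  have h1 : h * kstar * (kstar + 1) ≤ c := by
    nlinarith [mul_nonneg (mul_nonneg hh.le (sub_nonneg.2 hk_le_x))
      (show (0:ℝ) ≤ x + (kstar:ℝ) + 1 by positivity), hxeq]
  have h2 : c < h * ((kstar : ℝ) + 1) * ((kstar : ℝ) + 2) := by
    nlinarith [mul_pos (mul_pos hh (sub_pos.2 hx_lt))
      (show (0:ℝ) < (kstar:ℝ) + 2 + x by positivity), hxeq]
  -- step lemmas
  have diff : ∀ k : ℕ, c / ((k : ℝ) + 1) - c / ((k : ℝ) + 2) =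
      c / (((k : ℝ) + 1) * ((k : ℝ) + 2)) := by
    intro k
    have d1 : ((k : ℝ) + 1) ≠ 0 := by positivity
    have d2 : ((k : ℝ) + 2) ≠ 0 := by positivity
    field_simp
    ring
  have step_up : ∀ k : ℕ, k < kstar → W k ≤ W (k + 1) := by
    intro k hk
    have hk1 : (k : ℝ) + 1 ≤ (kstar : ℝ) := by exact_mod_cast hk
    have hle : h * (((k : ℝ) + 1) * ((k : ℝ) + 2)) ≤ c := by
      nlinarith [mul_nonneg (mul_nonneg hh.le (sub_nonneg.2 hk1))
        (show (0:ℝ) ≤ (kstar:ℝ) + (k:ℝ) + 2 by positivity), h1]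
    have dpos : (0:ℝ) < ((k : ℝ) + 1) * ((k : ℝ) + 2) := by positivity
    have key : h ≤ c / (((k : ℝ) + 1) * ((k : ℝ) + 2)) := by
      rw [le_div_iff₀ dpos]; linarith
    rw [hW k, hW (k + 1)]
    push_cast
    have := diff k
    have : c / ((k : ℝ) + 1) - c / ((k : ℝ) + 1 + 1) =
        c / (((k : ℝ) + 1) * ((k : ℝ) + 2)) := by
      rw [show (k : ℝ) + 1 + 1 = (k : ℝ) + 2 by ring]; exact diff k
    linarith
  have step_down : ∀ k : ℕ, kstar ≤ k → W (k + 1) ≤ W k := by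
    intro k hk
    have hk1 : (kstar : ℝ) ≤ (k : ℝ) := by exact_mod_cast hk
    have hle : c ≤ h * (((k : ℝ) + 1) * ((k : ℝ) + 2)) := by
      nlinarith [mul_nonneg (mul_nonneg hh.le (sub_nonneg.2 hk1))
        (show (0:ℝ) ≤ (k:ℝ) + (kstar:ℝ) + 3 by positivity), h2]
    have dpos : (0:ℝ) < ((k : ℝ) + 1) * ((k : ℝ) + 2) := by positivity
    have key : c / (((k : ℝ) + 1) * ((k : ℝ) + 2)) ≤ h := by
      rw [div_le_iff₀ dpos]; linarith
    rw [hW k, hW (k + 1)]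
    push_cast
    have : c / ((k : ℝ) + 1) - c / ((k : ℝ) + 1 + 1) =
        c / (((k : ℝ) + 1) * ((k : ℝ) + 2)) := by
      rw [show (k : ℝ) + 1 + 1 = (k : ℝ) + 2 by ring]; exact diff k
    linarith
  -- chain lemmas
  have up : ∀ j : ℕ, j ≤ kstar → ∀ k : ℕ, k ≤ j → W k ≤ W j := by
    intro j
    induction j with
    | zero =>
      intro _ k hk
      have hk0 : k = 0 := by omega
      rw [hk0]
    | succ n ih =>
      intro hj k hk
      rcases Nat.eq_or_lt_of_le hk with hEq | hlt
      · rw [hEq]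
      · have hk' : k ≤ n := by omega
        have := ih (by omega) k hk'
        have := step_up n (by omega)
        linarith
  have down : ∀ k : ℕ, kstar ≤ k → W k ≤ W kstar := by
    intro k
    induction k with
    | zero => intro hk; have : kstar = 0 := by omega
              rw [this]
    | succ n ih =>
      intro hk
      rcases Nat.eq_or_lt_of_le hk with hEq | hlt
      · rw [← hEq]
      · have h1 := ih (by omega)
        have h2 := step_down n (by omega)
        linarith
  intro k
  rcases le_or_gt k kstar with hk | hk
  · exact up kstar le_rfl k hk
  · exact down k hk.le
end

section
/- Let δ > 0 with δ ≠ 1, let c > 0 and h > 0, and for k ∈ ℕ and real constant A define W(k) = A − c·(1−δ)/(1−δ^{k+1}) − k·h. Then: (a) for every integer k ≥ 1, W(k) − W(k−1) = c·(1−δ)²·δ^k / ((1−δ^{k+1})(1−δ^k)) − h; and (b) the map k ↦ (1−δ)²·δ^k / ((1−δ^{k+1})(1−δ^k)) is positive and strictly decreasing for integers k ≥ 1. Consequently the sequence of first differences of W is strictly decreasing, so W is unimodal in k. -/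
/-- Properties of the welfare function
`W(k) = A − c·(1−δ)/(1−δ^{k+1}) − k·h` in the asymmetric case `δ ≠ 1`:
(a) the first-difference formula; (b) the coefficient
`(1−δ)²·δ^k/((1−δ^{k+1})(1−δ^k))` is positive and strictly decreasing for
`k ≥ 1`; consequently the first differences of `W` are strictly decreasing, so
`W` is unimodal in `k`. -/
theorem welfare_first_differences_asymmetric
    (δ c h A : ℝ) (hδ0 : 0 < δ) (hδ1 : δ ≠ 1) (hc : 0 < c) (hh : 0 < h)
    (W : ℕ → ℝ)
    (hW : ∀ k : ℕ, W k = A - c * (1 - δ) / (1 - δ ^ (k + 1)) - k * h) :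
    (∀ k : ℕ, 1 ≤ k →
      W k - W (k - 1)
        = c * (1 - δ) ^ 2 * δ ^ k / ((1 - δ ^ (k + 1)) * (1 - δ ^ k)) - h) ∧
    (∀ k : ℕ, 1 ≤ k →
      0 < (1 - δ) ^ 2 * δ ^ k / ((1 - δ ^ (k + 1)) * (1 - δ ^ k))) ∧
    (∀ k : ℕ, 1 ≤ k →
      (1 - δ) ^ 2 * δ ^ (k + 1) / ((1 - δ ^ (k + 2)) * (1 - δ ^ (k + 1)))
        < (1 - δ) ^ 2 * δ ^ k / ((1 - δ ^ (k + 1)) * (1 - δ ^ k))) ∧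
    (∀ k : ℕ, 1 ≤ k → W (k + 1) - W k < W k - W (k - 1)) := by
  have hδne : (1 : ℝ) - δ ≠ 0 := sub_ne_zero.mpr (Ne.symm hδ1)
  have hsq : 0 < (1 - δ) ^ 2 := by positivity
  have key : ∀ m : ℕ, 1 ≤ m → 0 < (1 - δ) * (1 - δ ^ m) := by
    intro m hm
    rcases lt_or_gt_of_ne hδ1 with h1 | h1
    · have : δ ^ m < 1 := pow_lt_one₀ hδ0.le h1 (by omega)
      nlinarith
    · have : 1 < δ ^ m := one_lt_pow₀ h1 (by omega)
      nlinarith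
  have hne : ∀ m : ℕ, 1 ≤ m → 1 - δ ^ m ≠ 0 := by
    intro m hm
    rcases lt_or_gt_of_ne hδ1 with h1 | h1
    · have : δ ^ m < 1 := pow_lt_one₀ hδ0.le h1 (by omega)
      intro hcontra; linarith
    · have : 1 < δ ^ m := one_lt_pow₀ h1 (by omega)
      intro hcontra; linarith
  have hDpos : ∀ m : ℕ, 1 ≤ m → 0 < (1 - δ ^ (m + 1)) * (1 - δ ^ m) := by
    intro m hm
    rcases lt_or_gt_of_ne hδ1 with h1 | h1
    · have a1 : δ ^ (m + 1) < 1 := pow_lt_one₀ hδ0.le h1 (by omega)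
      have a2 : δ ^ m < 1 := pow_lt_one₀ hδ0.le h1 (by omega)
      exact mul_pos (by linarith) (by linarith)
    · have a1 : 1 < δ ^ (m + 1) := one_lt_pow₀ h1 (by omega)
      have a2 : 1 < δ ^ m := one_lt_pow₀ h1 (by omega)
      exact mul_pos_of_neg_of_neg (by linarith) (by linarith)
  have partA : ∀ k : ℕ, 1 ≤ k →
      W k - W (k - 1)
        = c * (1 - δ) ^ 2 * δ ^ k / ((1 - δ ^ (k + 1)) * (1 - δ ^ k)) - h := by
    intro k hk
    obtain ⟨n, rfl⟩ : ∃ n, k = n + 1 := ⟨k - 1, by omega⟩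
    simp only [Nat.add_sub_cancel]
    rw [hW (n + 1), hW n]
    have h1 := hne (n + 1) (by omega)
    have h2 := hne (n + 2) (by omega)
    push_cast
    field_simp
    ring
  have partB : ∀ k : ℕ, 1 ≤ k →
      0 < (1 - δ) ^ 2 * δ ^ k / ((1 - δ ^ (k + 1)) * (1 - δ ^ k)) := by
    intro k hk
    exact div_pos (mul_pos hsq (pow_pos hδ0 k)) (hDpos k hk)
  have partC : ∀ k : ℕ, 1 ≤ k →
      (1 - δ) ^ 2 * δ ^ (k + 1) / ((1 - δ ^ (k + 2)) * (1 - δ ^ (k + 1)))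
        < (1 - δ) ^ 2 * δ ^ k / ((1 - δ ^ (k + 1)) * (1 - δ ^ k)) := by
    intro k hk
    rw [div_lt_div_iff₀ (hDpos (k + 1) (by omega)) (hDpos k hk)]
    have hk1 := key (k + 1) (by omega)
    have hp : (0:ℝ) < δ ^ k := pow_pos hδ0 k
    have hplus : (0:ℝ) < 1 + δ ^ (k + 1) := by positivity
    have hid : (1 - δ) ^ 2 * δ ^ k * ((1 - δ ^ (k + 2)) * (1 - δ ^ (k + 1)))
        - (1 - δ) ^ 2 * δ ^ (k + 1) * ((1 - δ ^ (k + 1)) * (1 - δ ^ k))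
        = ((1 - δ) * (1 - δ ^ (k + 1))) * ((1 - δ) ^ 2 * δ ^ k * (1 + δ ^ (k + 1))) := by
      ring
    nlinarith [mul_pos hk1 (mul_pos (mul_pos hsq hp) hplus)]
  refine ⟨partA, partB, partC, ?_⟩
  intro k hk
  have h2 := partA (k + 1) (by omega)
  simp only [Nat.add_sub_cancel] at h2
  rw [partA k hk, h2]
  have h3 := partC k hk
  have h4 := mul_lt_mul_of_pos_left h3 hc
  have e1 : c * (1 - δ) ^ 2 * δ ^ (k + 1) / ((1 - δ ^ (k + 1 + 1)) * (1 - δ ^ (k + 1)))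
      = c * ((1 - δ) ^ 2 * δ ^ (k + 1) / ((1 - δ ^ (k + 2)) * (1 - δ ^ (k + 1)))) := by
    norm_num [mul_div_assoc, mul_assoc]
  have e2 : c * (1 - δ) ^ 2 * δ ^ k / ((1 - δ ^ (k + 1)) * (1 - δ ^ k))
      = c * ((1 - δ) ^ 2 * δ ^ k / ((1 - δ ^ (k + 1)) * (1 - δ ^ k))) := by
    ring
  linarith [h4, e1.ge, e2.le]
end

section
/- Let p, q ∈ (0,1) with p > q, so that δ := q(1−p)/(p(1−q)) ∈ (0,1). Let h > 0, α ∈ [0,1], and let r_HH, r_HL, r_LH, r_LL be reals with r_HH − r_HL ≥ r_LH − r_LL ≥ 0. Let k := ⌊q·α·(r_HH − r_HL)/h⌋ ∈ ℕ. Then (h/(q(1−p)))·(1 − δ^{k+1})/(δ^{k}·(1−δ)) > α·(r_LH − r_LL). (That is, the expected waiting cost EW¹_L(0) of the first L-type supply agent strictly exceeds his waiting benefit, so when p > q the first L-type supply agent never waits for a future H-type demand agent.) -/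
lemma geom_lower_bound (δ : ℝ) (h0 : 0 < δ) (h1 : δ < 1) :
    ∀ k : ℕ, ((k : ℝ) + 1) * (δ ^ k * (1 - δ)) ≤ 1 - δ ^ (k + 1) := by
  intro k
  induction k with
  | zero => simp
  | succ n ih =>
    have hpow : δ ^ (n + 1) ≤ δ ^ n := pow_le_pow_of_le_one h0.le h1.le (by omega)
    have hδ1 : 0 ≤ 1 - δ := by linarith
    push_cast
    push_cast at ih
    have hps : δ ^ (n + 1 + 1) = δ ^ (n + 1) * δ := pow_succ δ (n + 1)
    have hn : (0:ℝ) ≤ (n:ℝ) + 1 := by positivity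
    nlinarith [mul_nonneg (mul_nonneg hn hδ1) (sub_nonneg.mpr hpow)]

/-- When `p > q` (so that `δ = q(1−p)/(p(1−q)) ∈ (0,1)`), the expected waiting
cost `EW¹_L(0) = (h/(q(1−p)))·(1 − δ^{k+1})/(δ^k(1−δ))` of the first L-type
supply agent, with `k = ⌊q·α·(r_HH − r_HL)/h⌋`, strictly exceeds his waiting
benefit `α·(r_LH − r_LL)`: the first L-type supply agent never waits for a
future H-type demand agent. -/
theorem first_L_supply_never_waits
    (p q δ h α rHH rHL rLH rLL : ℝ)
    (hp : p ∈ Set.Ioo (0 : ℝ) 1) (hq : q ∈ Set.Ioo (0 : ℝ) 1) (hpq : p > q)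
    (hδ : δ = q * (1 - p) / (p * (1 - q)))
    (hh : 0 < h) (hα : α ∈ Set.Icc (0 : ℝ) 1)
    (h1 : rHH - rHL ≥ rLH - rLL) (h2 : rLH - rLL ≥ 0)
    (k : ℕ) (hk : k = ⌊q * α * (rHH - rHL) / h⌋₊) :
    h / (q * (1 - p)) * ((1 - δ ^ (k + 1)) / (δ ^ k * (1 - δ)))
      > α * (rLH - rLL) := by
  obtain ⟨hp0, hp1⟩ := hp
  obtain ⟨hq0, hq1⟩ := hq
  obtain ⟨hα0, hα1⟩ := hα
  have h1p : 0 < 1 - p := by linarith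
  have h1q : 0 < 1 - q := by linarith
  have hδ0 : 0 < δ := by
    rw [hδ]; positivity
  have hδ1 : δ < 1 := by
    rw [hδ, div_lt_one (by positivity)]
    nlinarith
  -- floor fact
  have hfloor : q * α * (rHH - rHL) / h < (k : ℝ) + 1 := by
    rw [hk]; exact Nat.lt_floor_add_one _
  have hmul : q * α * (rHH - rHL) < h * ((k : ℝ) + 1) := by
    rw [div_lt_iff₀ hh] at hfloor; linarith
  have hden : 0 < δ ^ k * (1 - δ) := by
    have := pow_pos hδ0 k
    nlinarith
  have hgeom : ((k : ℝ) + 1) ≤ (1 - δ ^ (k + 1)) / (δ ^ k * (1 - δ)) :=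
    (le_div_iff₀ hden).mpr (geom_lower_bound δ hδ0 hδ1 k)
  have hc : 0 < h / (q * (1 - p)) := div_pos hh (by positivity)
  have step1 : h / (q * (1 - p)) * ((k : ℝ) + 1)
      ≤ h / (q * (1 - p)) * ((1 - δ ^ (k + 1)) / (δ ^ k * (1 - δ))) :=
    mul_le_mul_of_nonneg_left hgeom hc.le
  have step2 : α * (rLH - rLL) < h / (q * (1 - p)) * ((k : ℝ) + 1) := by
    rw [div_mul_eq_mul_div, lt_div_iff₀ (by positivity : (0:ℝ) < q * (1 - p))]
    have hq' : q * α * (rLH - rLL) ≤ q * α * (rHH - rHL) :=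
      mul_le_mul_of_nonneg_left h1 (by positivity)
    nlinarith [mul_nonneg hα0 h2, mul_nonneg (mul_nonneg hq0.le hα0) h2]
  linarith
end

section
/- Let c > 0 and h > 0 with c ≥ 2h, and let x := (−h + √(h² + 4hc))/(2h). Then: (a) √(c/(2h)) ≤ x; (b) 2·√(c/(2h)) ≥ x + 1; (c) c/h ≥ x + 1. Moreover, c ≥ 6h if and only if c/(2h) ≥ x + 1. -/
/-- Comparison of the full-backlog threshold real `√(c/(2h))` with the
one-sided-backlog threshold real `x = (−h + √(h² + 4hc))/(2h)` when `c ≥ 2h`: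
(a) `√(c/(2h)) ≤ x`; (b) `2√(c/(2h)) ≥ x + 1`; (c) `c/h ≥ x + 1`; and
`c ≥ 6h` iff `c/(2h) ≥ x + 1`. -/
theorem threshold_comparison_large_supermodularity
    (c h x : ℝ) (hc0 : 0 < c) (hh : 0 < h) (hc : 2 * h ≤ c)
    (hx : x = (-h + Real.sqrt (h ^ 2 + 4 * h * c)) / (2 * h)) :
    (Real.sqrt (c / (2 * h)) ≤ x) ∧
    (x + 1 ≤ 2 * Real.sqrt (c / (2 * h))) ∧
    (x + 1 ≤ c / h) ∧
    (6 * h ≤ c ↔ x + 1 ≤ c / (2 * h)) := by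
  set s := Real.sqrt (h ^ 2 + 4 * h * c) with hs
  set t := Real.sqrt (c / (2 * h)) with ht
  have hs0 : 0 ≤ s := Real.sqrt_nonneg _
  have ht0 : 0 ≤ t := Real.sqrt_nonneg _
  have hs2 : s ^ 2 = h ^ 2 + 4 * h * c := Real.sq_sqrt (by positivity)
  have ht2 : t ^ 2 = c / (2 * h) := Real.sq_sqrt (by positivity)
  have ht2' : 2 * h * t ^ 2 = c := by
    rw [ht2]; field_simp
  have h2h : (0:ℝ) < 2 * h := by linarith
  -- key: 2 h t ≤ c
  have hk : 2 * h * t ≤ c := by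
    nlinarith [ht2', hc, hc0, hh, ht0]
  -- key: s ≤ 2c - h
  have hsle : s ≤ 2 * c - h := by
    nlinarith [hs2, hs0, hc, hc0, hh]
  refine ⟨?_, ?_, ?_, ?_⟩
  · rw [hx, le_div_iff₀ h2h]
    nlinarith [hs2, ht2', hs0, ht0, hk, hh, hc0]
  · rw [hx, div_add' _ _ _ (ne_of_gt h2h), div_le_iff₀ h2h]
    have hb : 0 < h + s + 4 * h * t := by positivity
    nlinarith [hs2, ht2', hs0, ht0, hsle, hh, hc0, hb,
      mul_le_mul_of_nonneg_left hsle (le_of_lt h2h)]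
  · rw [hx, div_add' _ _ _ (ne_of_gt h2h), div_le_div_iff₀ h2h hh]
    nlinarith [hsle, hh]
  · rw [hx, div_add' _ _ _ (ne_of_gt h2h), div_le_div_iff₀ h2h h2h]
    constructor
    · intro h6
      have : s ≤ c - h := by nlinarith [hs2, hs0, hh, hc0]
      nlinarith [hh]
    · intro hle
      have : s ≤ c - h := by nlinarith [hh]
      nlinarith [hs2, hs0, hh, hc0, this]
end

section
/- Let p ∈ (0,1), h > 0, r ≥ 0, and r_HH, r_LL ∈ ℝ, and set c := p(1−p)·r. Define k_FB := ⌊√(c/(2h))⌋ and k_OB := ⌊(−h + √(h² + 4hc))/(2h)⌋ (both in ℕ), and define W_FB := p·r_HH + (1−p)·r_LL − c/(2k_FB+1) − (2·k_FB·(k_FB+1)/(2k_FB+1))·h, W_OB := p·r_HH + (1−p)·r_LL − c/(k_OB+1) − k_OB·h, and W_NB := p·r_HH + (1−p)·r_LL − c. Then W_FB ≥ W_OB ≥ W_NB. -/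
/-- `f m = (c + 2m(m+1)h)/(2m+1)` decreases when `2h(m+1)^2 ≤ c`. -/
lemma fstep_down (c h : ℝ) (hh : 0 < h) (m : ℕ) (hcm : 2 * h * ((m : ℝ) + 1) ^ 2 ≤ c) :
    (c + 2 * ((m : ℝ) + 1) * ((m : ℝ) + 1 + 1) * h) / (2 * ((m : ℝ) + 1) + 1)
      ≤ (c + 2 * (m : ℝ) * ((m : ℝ) + 1) * h) / (2 * (m : ℝ) + 1) := by
  rw [div_le_div_iff₀ (by positivity) (by positivity)]
  nlinarith [hcm, Nat.cast_nonneg (α := ℝ) m]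

/-- `f m = (c + 2m(m+1)h)/(2m+1)` increases when `c ≤ 2h(m+1)^2`. -/
lemma fstep_up (c h : ℝ) (hh : 0 < h) (m : ℕ) (hcm : c ≤ 2 * h * ((m : ℝ) + 1) ^ 2) :
    (c + 2 * (m : ℝ) * ((m : ℝ) + 1) * h) / (2 * (m : ℝ) + 1)
      ≤ (c + 2 * ((m : ℝ) + 1) * ((m : ℝ) + 1 + 1) * h) / (2 * ((m : ℝ) + 1) + 1) := by
  rw [div_le_div_iff₀ (by positivity) (by positivity)]
  nlinarith [hcm, Nat.cast_nonneg (α := ℝ) m]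

/-- `kFB = ⌊√(c/(2h))⌋` minimizes `f`. -/
lemma fmin (c h : ℝ) (hc0 : 0 ≤ c) (hh : 0 < h) (K : ℕ)
    (hK : K = ⌊Real.sqrt (c / (2 * h))⌋₊) (m : ℕ) :
    (c + 2 * (K : ℝ) * ((K : ℝ) + 1) * h) / (2 * (K : ℝ) + 1)
      ≤ (c + 2 * (m : ℝ) * ((m : ℝ) + 1) * h) / (2 * (m : ℝ) + 1) := by
  set F : ℕ → ℝ := fun n => (c + 2 * (n : ℝ) * ((n : ℝ) + 1) * h) / (2 * (n : ℝ) + 1) with hF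
  have hdiv : 0 ≤ c / (2 * h) := by positivity
  -- descending: if n + 1 ≤ K then F (n+1) ≤ F n
  have step_down : ∀ n : ℕ, n + 1 ≤ K → F (n + 1) ≤ F n := by
    intro n hn
    have h1 : ((n : ℝ) + 1) ≤ Real.sqrt (c / (2 * h)) := by
      have := Nat.le_floor_iff (α := ℝ) (Real.sqrt_nonneg _) |>.mp (hK ▸ hn)
      push_cast at this ⊢; linarith
    have h2 : ((n : ℝ) + 1) ^ 2 ≤ c / (2 * h) :=
      (Real.le_sqrt (by positivity) hdiv).mp h1
    have h3 : 2 * h * ((n : ℝ) + 1) ^ 2 ≤ c := by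
      rw [le_div_iff₀ (by positivity)] at h2; linarith
    have := fstep_down c h hh n h3
    simpa [hF, Nat.cast_succ] using this
  -- ascending: if K ≤ n then F n ≤ F (n+1)
  have step_up : ∀ n : ℕ, K ≤ n → F n ≤ F (n + 1) := by
    intro n hn
    have h1 : Real.sqrt (c / (2 * h)) < (n : ℝ) + 1 := by
      have : ⌊Real.sqrt (c / (2 * h))⌋₊ < n + 1 := by omega
      have := Nat.floor_lt (Real.sqrt_nonneg _) |>.mp this
      push_cast at this ⊢; linarith
    have h2 : c / (2 * h) < ((n : ℝ) + 1) ^ 2 :=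
      (Real.sqrt_lt' (by positivity)).mp h1
    have h3 : c ≤ 2 * h * ((n : ℝ) + 1) ^ 2 := by
      rw [div_lt_iff₀ (by positivity)] at h2; linarith
    have := fstep_up c h hh n h3
    simpa [hF, Nat.cast_succ] using this
  rcases le_or_gt m K with hmK | hKm
  · -- downward induction on the gap
    have key : ∀ d n : ℕ, n + d = K → F K ≤ F n := by
      intro d
      induction d with
      | zero => intro n hn; simp at hn; simp [hn]
      | succ d ih =>
        intro n hn
        have h1 : F K ≤ F (n + 1) := ih (n + 1) (by omega)
        exact h1.trans (step_down n (by omega))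
    exact key (K - m) m (by omega)
  · have key : ∀ d : ℕ, F K ≤ F (K + d) := by
      intro d
      induction d with
      | zero => simp
      | succ d ih => exact ih.trans (step_up (K + d) (by omega))
    have := key (m - K)
    have hm : K + (m - K) = m := by omega
    rwa [hm] at this

/-- Welfare ordering across patience regimes in the centralized setting with
symmetric arrivals `p = q`: the full-backlog optimal welfare is at least the
one-sided-backlog optimal welfare, which is at least the no-backlog welfare. -/
theorem centralized_welfare_ordering
    (p h r rHH rLL c : ℝ) (hp : p ∈ Set.Ioo (0 : ℝ) 1) (hh : 0 < h)
    (hr : 0 ≤ r) (hc : c = p * (1 - p) * r)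
    (kFB kOB : ℕ)
    (hkFB : kFB = ⌊Real.sqrt (c / (2 * h))⌋₊)
    (hkOB : kOB = ⌊(-h + Real.sqrt (h ^ 2 + 4 * h * c)) / (2 * h)⌋₊)
    (WFB WOB WNB : ℝ)
    (hWFB : WFB = p * rHH + (1 - p) * rLL - c / (2 * (kFB : ℝ) + 1)
      - (2 * (kFB : ℝ) * ((kFB : ℝ) + 1) / (2 * (kFB : ℝ) + 1)) * h)
    (hWOB : WOB = p * rHH + (1 - p) * rLL - c / ((kOB : ℝ) + 1) - (kOB : ℝ) * h)
    (hWNB : WNB = p * rHH + (1 - p) * rLL - c) :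
    WNB ≤ WOB ∧ WOB ≤ WFB := by
  obtain ⟨hp0, hp1⟩ := hp
  have hc0 : 0 ≤ c := by
    rw [hc]
    have : (0:ℝ) ≤ 1 - p := by linarith
    positivity
  -- key fact: h * kOB * (kOB + 1) ≤ c
  have hkey : h * (kOB : ℝ) * ((kOB : ℝ) + 1) ≤ c := by
    have hsq : h ≤ Real.sqrt (h ^ 2 + 4 * h * c) := by
      have h1 : Real.sqrt (h ^ 2) ≤ Real.sqrt (h ^ 2 + 4 * h * c) :=
        Real.sqrt_le_sqrt (by nlinarith)
      rwa [Real.sqrt_sq hh.le] at h1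
    have hnn : 0 ≤ (-h + Real.sqrt (h ^ 2 + 4 * h * c)) / (2 * h) := by
      apply div_nonneg _ (by positivity)
      linarith
    have h1 : (kOB : ℝ) ≤ (-h + Real.sqrt (h ^ 2 + 4 * h * c)) / (2 * h) := by
      rw [hkOB]; exact Nat.floor_le hnn
    have h2 : 2 * h * (kOB : ℝ) + h ≤ Real.sqrt (h ^ 2 + 4 * h * c) := by
      rw [le_div_iff₀ (by positivity)] at h1; linarith
    have h3 : (2 * h * (kOB : ℝ) + h) ^ 2 ≤ h ^ 2 + 4 * h * c := by
      have hpos : 0 ≤ 2 * h * (kOB : ℝ) + h := by positivity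
      have := (Real.le_sqrt hpos (by nlinarith)).mp h2
      exact this
    nlinarith [h3, Nat.cast_nonneg (α := ℝ) kOB, hh]
  constructor
  · -- WNB ≤ WOB
    have h1 : c / ((kOB : ℝ) + 1) ≤ c - (kOB : ℝ) * h := by
      rw [div_le_iff₀ (by positivity : (0:ℝ) < (kOB : ℝ) + 1)]
      rcases Nat.eq_zero_or_pos kOB with h0 | h0
      · simp [h0]
      · have hk1 : (1:ℝ) ≤ (kOB : ℝ) := by exact_mod_cast h0
        nlinarith [hkey, Nat.cast_nonneg (α := ℝ) kOB]
    rw [hWNB, hWOB]; linarith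
  · -- WOB ≤ WFB
    have hFBpos : (0:ℝ) < 2 * (kFB : ℝ) + 1 := by positivity
    have hOBpos : (0:ℝ) < 2 * (kOB : ℝ) + 1 := by positivity
    have e1 : c / (2 * (kFB : ℝ) + 1)
        + (2 * (kFB : ℝ) * ((kFB : ℝ) + 1) / (2 * (kFB : ℝ) + 1)) * h
        = (c + 2 * (kFB : ℝ) * ((kFB : ℝ) + 1) * h) / (2 * (kFB : ℝ) + 1) := by
      field_simp
    have hmin := fmin c h hc0 hh kFB hkFB kOB
    have h2 : (c + 2 * (kOB : ℝ) * ((kOB : ℝ) + 1) * h) / (2 * (kOB : ℝ) + 1)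
        ≤ c / ((kOB : ℝ) + 1) + (kOB : ℝ) * h := by
      have e2 : c / ((kOB : ℝ) + 1) + (kOB : ℝ) * h
          = (c + (kOB : ℝ) * h * ((kOB : ℝ) + 1)) / ((kOB : ℝ) + 1) := by
        field_simp
      rw [e2, div_le_div_iff₀ hOBpos (by positivity)]
      rcases Nat.eq_zero_or_pos kOB with h0 | h0
      · simp [h0]
      · have hk1 : (1:ℝ) ≤ (kOB : ℝ) := by exact_mod_cast h0
        nlinarith [hkey, hc0, Nat.cast_nonneg (α := ℝ) kOB]
    rw [hWOB, hWFB]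
    have := hmin.trans h2
    linarith [e1 ▸ this]
end

section
/- Let p ∈ (0,1), h > 0, r ≥ 0, and r_HH, r_LL ∈ ℝ, and set c := p(1−p)·r. Define k_FB := ⌊√(c/(2h))⌋ and k_OB := ⌊(−h + √(h² + 4hc))/(2h)⌋ (both in ℕ), and define W_FB := p·r_HH + (1−p)·r_LL − c/(2k_FB+1) − (2·k_FB·(k_FB+1)/(2k_FB+1))·h, W_OB := p·r_HH + (1−p)·r_LL − c/(k_OB+1) − k_OB·h, and W_NB := p·r_HH + (1−p)·r_LL − c. Then W_FB − W_OB ≤ W_OB − W_NB; that is, patience has diminishing marginal returns: the welfare gain from making the second side patient is at most the gain from making the first side patient. -/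
/-- Optimality of `m = kOB` for the one-sided-backlog cost
`f(a) = c/(a+1) + a*h`, given `h*m*(m+1) ≤ c < h*(m+1)*(m+2)`. -/
lemma aux_opt_cdp (c h : ℝ) (hh : 0 < h) (m a : ℕ)
    (h1 : h * m * (m + 1) ≤ c) (h2 : c < h * ((m:ℝ) + 1) * ((m:ℝ) + 2)) :
    c / ((m:ℝ) + 1) + m * h ≤ c / ((a:ℝ) + 1) + a * h := by
  have hmpos : (0:ℝ) < (m:ℝ) + 1 := by positivity
  have hapos : (0:ℝ) < (a:ℝ) + 1 := by positivity
  rw [div_add' _ _ _ (ne_of_gt hmpos), div_add' _ _ _ (ne_of_gt hapos),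
    div_le_div_iff₀ hmpos hapos]
  have ha0 : (0:ℝ) ≤ (a:ℝ) := Nat.cast_nonneg a
  have hm0 : (0:ℝ) ≤ (m:ℝ) := Nat.cast_nonneg m
  rcases lt_trichotomy a m with hlt | heq | hgt
  · have hle : (a:ℝ) + 1 ≤ (m:ℝ) := by exact_mod_cast hlt
    have h3 : h * ((m:ℝ) + 1) * ((a:ℝ) + 1) ≤ c := by nlinarith
    have h4 : (0:ℝ) ≤ ((m:ℝ) - a) * (c - h * ((m:ℝ) + 1) * ((a:ℝ) + 1)) :=
      mul_nonneg (by linarith) (by linarith)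
    nlinarith [h4]
  · subst heq; exact le_of_eq (by ring)
  · have hle : (m:ℝ) + 1 ≤ (a:ℝ) := by exact_mod_cast hgt
    have h3 : c < h * ((m:ℝ) + 1) * ((a:ℝ) + 1) := by nlinarith
    have h4 : (0:ℝ) ≤ ((a:ℝ) - m) * (h * ((m:ℝ) + 1) * ((a:ℝ) + 1) - c) :=
      mul_nonneg (by linarith) (by linarith)
    nlinarith [h4]

/-- Floor bounds for `kOB`. -/
lemma aux_bounds_cdp (c h : ℝ) (hh : 0 < h) (hc0 : 0 ≤ c) (m : ℕ)
    (hm : m = ⌊(-h + Real.sqrt (h ^ 2 + 4 * h * c)) / (2 * h)⌋₊) :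
    h * m * (m + 1) ≤ c ∧ c < h * ((m:ℝ) + 1) * ((m:ℝ) + 2) := by
  set s : ℝ := Real.sqrt (h ^ 2 + 4 * h * c) with hsdef
  have hss : s * s = h ^ 2 + 4 * h * c := Real.mul_self_sqrt (by positivity)
  have hs0 : 0 ≤ s := Real.sqrt_nonneg _
  have hsh : h ≤ s := by nlinarith [hss, hs0, hc0, hh]
  set x : ℝ := (-h + s) / (2 * h) with hxdef
  have hx0 : 0 ≤ x := div_nonneg (by linarith) (by linarith)
  have h2x : 2 * h * x = -h + s := by rw [hxdef]; field_simp
  have hmx : (m : ℝ) ≤ x := by rw [hm]; exact Nat.floor_le hx0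
  have hxm : x < (m : ℝ) + 1 := by rw [hm]; exact Nat.lt_floor_add_one x
  constructor
  · have hmle : 2 * h * (m : ℝ) + h ≤ s := by nlinarith [hmx, hh]
    have hsq : (2 * h * (m : ℝ) + h) * (2 * h * (m : ℝ) + h) ≤ s * s :=
      mul_self_le_mul_self (by positivity) hmle
    have h4 : 4 * h * (h * (m : ℝ) * ((m : ℝ) + 1)) ≤ 4 * h * c := by
      nlinarith [hsq, hss]
    exact le_of_mul_le_mul_left h4 (by linarith)
  · have hslt : s < 2 * h * ((m : ℝ) + 1) + h := by nlinarith [hxm, hh]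
    have hsq : s * s < (2 * h * ((m : ℝ) + 1) + h) * (2 * h * ((m : ℝ) + 1) + h) :=
      mul_self_lt_mul_self hs0 hslt
    have h4 : 4 * h * c < 4 * h * (h * ((m : ℝ) + 1) * ((m : ℝ) + 2)) := by
      nlinarith [hsq, hss]
    exact lt_of_mul_lt_mul_left h4 (by linarith)

/-- Floor bound for `kFB`. -/
lemma aux_kfb_cdp (c h : ℝ) (hh : 0 < h) (hc0 : 0 ≤ c) (k : ℕ)
    (hk : k = ⌊Real.sqrt (c / (2 * h))⌋₊) :
    2 * h * (k : ℝ) ^ 2 ≤ c := by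
  have hkle : (k : ℝ) ≤ Real.sqrt (c / (2 * h)) := by
    rw [hk]; exact Nat.floor_le (Real.sqrt_nonneg _)
  have h1 : (k : ℝ) * (k : ℝ) ≤ c / (2 * h) := by
    nlinarith [Real.mul_self_sqrt (show (0:ℝ) ≤ c / (2*h) by positivity),
      hkle, (Nat.cast_nonneg k : (0:ℝ) ≤ (k:ℝ)), Real.sqrt_nonneg (c / (2*h))]
  have h2 : (0:ℝ) < 2 * h := by linarith
  rw [le_div_iff₀ h2] at h1
  nlinarith [h1]

/-- Core inequality: twice the optimal one-sided-backlog cost is at most the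
full-backlog cost plus the no-backlog cost. -/
lemma aux_key_cdp (c h : ℝ) (hh : 0 < h) (m k : ℕ)
    (hm1 : h * m * (m + 1) ≤ c) (hm2 : c < h * ((m:ℝ) + 1) * ((m:ℝ) + 2))
    (hkk : 2 * h * (k : ℝ) ^ 2 ≤ c) :
    2 * (c / ((m : ℝ) + 1) + (m : ℝ) * h)
      ≤ c / (2 * (k : ℝ) + 1)
        + (2 * (k : ℝ) * ((k : ℝ) + 1) / (2 * (k : ℝ) + 1)) * h + c := by
  have hF0 : c / ((m : ℝ) + 1) + (m : ℝ) * h ≤ c := by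
    have := aux_opt_cdp c h hh m 0 hm1 hm2
    norm_num at this
    linarith [this]
  have hFk : c / ((m : ℝ) + 1) + (m : ℝ) * h
      ≤ c / ((k : ℝ) + 1) + (k : ℝ) * h := aux_opt_cdp c h hh m k hm1 hm2
  rcases Nat.eq_zero_or_pos k with hk0 | hkpos
  · subst hk0
    norm_num
    linarith [hF0]
  · have hk1 : (1:ℝ) ≤ (k : ℝ) := by exact_mod_cast hkpos
    have hhk : h * ((k : ℝ) + 1) ≤ c := by
      nlinarith [hkk, mul_nonneg hh.le (mul_nonneg (sub_nonneg.mpr hk1)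
        (by positivity : (0:ℝ) ≤ 2 * (k:ℝ) + 1))]
    have d1 : (0:ℝ) < (k : ℝ) + 1 := by positivity
    have d2 : (0:ℝ) < 2 * (k : ℝ) + 1 := by positivity
    have hident : c / (2 * (k : ℝ) + 1)
        + (2 * (k : ℝ) * ((k : ℝ) + 1) / (2 * (k : ℝ) + 1)) * h + c
        - 2 * (c / ((k : ℝ) + 1) + (k : ℝ) * h)
        = (2 * (k : ℝ) ^ 2 / (((k : ℝ) + 1) * (2 * (k : ℝ) + 1)))
          * (c - h * ((k : ℝ) + 1)) := by
      field_simp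
      ring
    have hnn : (0:ℝ) ≤ (2 * (k : ℝ) ^ 2 / (((k : ℝ) + 1) * (2 * (k : ℝ) + 1)))
        * (c - h * ((k : ℝ) + 1)) :=
      mul_nonneg (by positivity) (by linarith)
    linarith [hFk, hident, hnn]

/-- Diminishing marginal returns to patience in the centralized setting with
symmetric arrivals `p = q`: the welfare gain from making the second side
patient is at most the gain from making the first side patient, i.e.,
`W_FB − W_OB ≤ W_OB − W_NB`. -/
theorem centralized_diminishing_returns_to_patience
    (p h r rHH rLL c : ℝ) (hp : p ∈ Set.Ioo (0 : ℝ) 1) (hh : 0 < h)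
    (hr : 0 ≤ r) (hc : c = p * (1 - p) * r)
    (kFB kOB : ℕ)
    (hkFB : kFB = ⌊Real.sqrt (c / (2 * h))⌋₊)
    (hkOB : kOB = ⌊(-h + Real.sqrt (h ^ 2 + 4 * h * c)) / (2 * h)⌋₊)
    (WFB WOB WNB : ℝ)
    (hWFB : WFB = p * rHH + (1 - p) * rLL - c / (2 * (kFB : ℝ) + 1)
      - (2 * (kFB : ℝ) * ((kFB : ℝ) + 1) / (2 * (kFB : ℝ) + 1)) * h)
    (hWOB : WOB = p * rHH + (1 - p) * rLL - c / ((kOB : ℝ) + 1) - (kOB : ℝ) * h)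
    (hWNB : WNB = p * rHH + (1 - p) * rLL - c) :
    WFB - WOB ≤ WOB - WNB := by
  obtain ⟨hp0, hp1⟩ := hp
  have hc0 : 0 ≤ c := by
    rw [hc]; exact mul_nonneg (mul_nonneg hp0.le (by linarith)) hr
  obtain ⟨hm1, hm2⟩ := aux_bounds_cdp c h hh hc0 kOB hkOB
  have hkk := aux_kfb_cdp c h hh hc0 kFB hkFB
  have key := aux_key_cdp c h hh kOB kFB hm1 hm2 hkk
  rw [hWFB, hWOB, hWNB]
  linarith [key]
end

section
/- Let h > 0, c ≥ 0, B ∈ ℝ, and k ∈ ℕ, and define W_FB(k) := B − c/(2k+1) − (2k(k+1)/(2k+1))·h, W_OB(k) := B − c/(k+1) − k·h, and W_NB := B − c. Then W_OB(k) − W_NB = (k/(k+1))·(c − (k+1)h) and W_FB(k) − W_OB(k) = (k/((k+1)(2k+1)))·(c − (k+1)h). Consequently: if c ≥ (k+1)·h then W_FB(k) ≥ W_OB(k) ≥ W_NB, and if c ≤ (k+1)·h then W_FB(k) ≤ W_OB(k) ≤ W_NB. -/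
/-- Sign lemma for the decentralized welfare comparison at a common equilibrium
threshold `k`: explicit expressions for `W_OB(k) − W_NB` and
`W_FB(k) − W_OB(k)`, and the resulting orderings depending on the sign of
`c − (k+1)h`. -/
theorem decentralized_welfare_sign_lemma
    (h c B : ℝ) (hh : 0 < h) (hc : 0 ≤ c) (k : ℕ)
    (WFB WOB WNB : ℝ)
    (hWFB : WFB = B - c / (2 * (k : ℝ) + 1)
      - (2 * (k : ℝ) * ((k : ℝ) + 1) / (2 * (k : ℝ) + 1)) * h)
    (hWOB : WOB = B - c / ((k : ℝ) + 1) - (k : ℝ) * h)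
    (hWNB : WNB = B - c) :
    (WOB - WNB = ((k : ℝ) / ((k : ℝ) + 1)) * (c - ((k : ℝ) + 1) * h)) ∧
    (WFB - WOB = ((k : ℝ) / (((k : ℝ) + 1) * (2 * (k : ℝ) + 1)))
      * (c - ((k : ℝ) + 1) * h)) ∧
    (((k : ℝ) + 1) * h ≤ c → WNB ≤ WOB ∧ WOB ≤ WFB) ∧
    (c ≤ ((k : ℝ) + 1) * h → WFB ≤ WOB ∧ WOB ≤ WNB) := by
  have hk : (0:ℝ) ≤ (k:ℝ) := Nat.cast_nonneg k
  have h1 : (0:ℝ) < (k:ℝ) + 1 := by linarith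
  have h2 : (0:ℝ) < 2 * (k:ℝ) + 1 := by linarith
  have e1 : WOB - WNB = ((k : ℝ) / ((k : ℝ) + 1)) * (c - ((k : ℝ) + 1) * h) := by
    rw [hWOB, hWNB]; field_simp; ring
  have e2 : WFB - WOB = ((k : ℝ) / (((k : ℝ) + 1) * (2 * (k : ℝ) + 1)))
      * (c - ((k : ℝ) + 1) * h) := by
    rw [hWFB, hWOB]; field_simp; ring
  refine ⟨e1, e2, ?_, ?_⟩
  · intro hle
    have hd : 0 ≤ c - ((k:ℝ)+1) * h := by linarith
    have p1 : 0 ≤ (k : ℝ) / ((k : ℝ) + 1) := div_nonneg hk h1.le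
    have p2 : 0 ≤ (k : ℝ) / (((k : ℝ) + 1) * (2 * (k : ℝ) + 1)) :=
      div_nonneg hk (mul_pos h1 h2).le
    constructor
    · nlinarith [mul_nonneg p1 hd]
    · nlinarith [mul_nonneg p2 hd]
  · intro hle
    have hd : c - ((k:ℝ)+1) * h ≤ 0 := by linarith
    have p1 : 0 ≤ (k : ℝ) / ((k : ℝ) + 1) := div_nonneg hk h1.le
    have p2 : 0 ≤ (k : ℝ) / (((k : ℝ) + 1) * (2 * (k : ℝ) + 1)) :=
      div_nonneg hk (mul_pos h1 h2).le
    constructor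
    · nlinarith [mul_nonpos_of_nonneg_of_nonpos p2 hd]
    · nlinarith [mul_nonpos_of_nonneg_of_nonpos p1 hd]
end

section
/- Let p ∈ (0,1), h > 0, α ∈ [0,1], r ≥ 0, and R := r_HH − r_HL > 0, and set c := p(1−p)·r and k := ⌊p·α·R/h⌋ ∈ ℕ. Define W_FB := B − c/(2k+1) − (2k(k+1)/(2k+1))·h, W_OB := B − c/(k+1) − k·h, and W_NB := B − c, where B := p·r_HH + (1−p)·r_LL. Then: (1) if α ≤ (1−p)·r/(2R), then W_FB ≥ W_OB ≥ W_NB; and (2) if α ≥ (1−p)·r/R, then W_FB ≤ W_OB ≤ W_NB. -/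
set_option maxHeartbeats 1000000 in
/-- Decentralized welfare comparison across patience regimes (Proposition 10,
cases (1) and (2)) with symmetric arrivals `p = q` and equilibrium threshold
`k = ⌊p·α·R/h⌋`, `R = r_HH − r_HL > 0`: if `α ≤ (1−p)r/(2R)` then
`W_FB ≥ W_OB ≥ W_NB`, and if `α ≥ (1−p)r/R` then `W_FB ≤ W_OB ≤ W_NB`. -/
theorem decentralized_welfare_comparison
    (p h α r rHH rHL rLL R c B : ℝ) (k : ℕ)
    (hp : p ∈ Set.Ioo (0 : ℝ) 1) (hh : 0 < h) (hα : α ∈ Set.Icc (0 : ℝ) 1)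
    (hr : 0 ≤ r) (hR : R = rHH - rHL) (hRpos : 0 < R)
    (hc : c = p * (1 - p) * r) (hB : B = p * rHH + (1 - p) * rLL)
    (hk : k = ⌊p * α * R / h⌋₊)
    (WFB WOB WNB : ℝ)
    (hWFB : WFB = B - c / (2 * (k : ℝ) + 1)
      - (2 * (k : ℝ) * ((k : ℝ) + 1) / (2 * (k : ℝ) + 1)) * h)
    (hWOB : WOB = B - c / ((k : ℝ) + 1) - (k : ℝ) * h)
    (hWNB : WNB = B - c) :
    (α ≤ (1 - p) * r / (2 * R) → WNB ≤ WOB ∧ WOB ≤ WFB) ∧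
    (α ≥ (1 - p) * r / R → WFB ≤ WOB ∧ WOB ≤ WNB) := by
  obtain ⟨hp0, hp1⟩ := hp
  obtain ⟨hα0, hα1⟩ := hα
  have hK0 : (0:ℝ) ≤ (k:ℝ) := Nat.cast_nonneg k
  have hd1 : (0:ℝ) < (k:ℝ) + 1 := by linarith
  have hd2 : (0:ℝ) < 2 * (k:ℝ) + 1 := by linarith
  have hx0 : 0 ≤ p * α * R / h := by positivity
  have hfl : (k:ℝ) * h ≤ p * α * R := by
    have h1 := Nat.floor_le hx0
    rw [← hk] at h1
    calc (k:ℝ) * h ≤ (p * α * R / h) * h :=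
          mul_le_mul_of_nonneg_right h1 (le_of_lt hh)
    _ = p * α * R := by field_simp
  have hfu : p * α * R < ((k:ℝ) + 1) * h := by
    have h1 := Nat.lt_floor_add_one (p * α * R / h)
    rw [← hk] at h1
    calc p * α * R = p * α * R / h * h := by field_simp
    _ < ((k:ℝ) + 1) * h := mul_lt_mul_of_pos_right h1 hh
  have e1 : c / (2 * (k:ℝ) + 1) + 2 * (k:ℝ) * ((k:ℝ) + 1) / (2 * (k:ℝ) + 1) * h
      = (c + 2 * (k:ℝ) * ((k:ℝ) + 1) * h) / (2 * (k:ℝ) + 1) := by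
    field_simp
  have e2 : c / ((k:ℝ) + 1) + (k:ℝ) * h
      = (c + (k:ℝ) * ((k:ℝ) + 1) * h) / ((k:ℝ) + 1) := by
    field_simp
  constructor
  · intro h1
    have h2 : α * (2 * R) ≤ (1 - p) * r := (le_div_iff₀ (by linarith)).mp h1
    have hpar : p * α * R ≤ c / 2 := by
      rw [hc]; nlinarith [mul_le_mul_of_nonneg_left h2 hp0.le]
    rcases Nat.eq_zero_or_pos k with hk0 | hk1
    · subst hk0
      rw [hWFB, hWOB, hWNB]
      norm_num
    · have hK1 : (1:ℝ) ≤ (k:ℝ) := by exact_mod_cast hk1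
      have hkey : ((k:ℝ) + 1) * h ≤ c := by
        nlinarith [mul_nonneg (by linarith : (0:ℝ) ≤ (k:ℝ) - 1) hh.le]
      have hnn : (0:ℝ) ≤ (k:ℝ) * (c - ((k:ℝ) + 1) * h) :=
        mul_nonneg hK0 (by linarith)
      constructor
      · rw [hWOB, hWNB]
        have : c / ((k:ℝ) + 1) ≤ c - (k:ℝ) * h := by
          rw [div_le_iff₀ hd1]; nlinarith
        linarith
      · rw [hWFB, hWOB]
        have key : (c + 2 * (k:ℝ) * ((k:ℝ) + 1) * h) / (2 * (k:ℝ) + 1)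
            ≤ (c + (k:ℝ) * ((k:ℝ) + 1) * h) / ((k:ℝ) + 1) := by
          rw [div_le_div_iff₀ hd2 hd1]; nlinarith
        linarith [key, e1, e2]
  · intro h2
    have h3 : (1 - p) * r ≤ α * R := by
      have := (div_le_iff₀ hRpos).mp h2
      linarith
    have hpar : c ≤ p * α * R := by
      rw [hc]; nlinarith [mul_le_mul_of_nonneg_left h3 hp0.le]
    have hkey : c ≤ ((k:ℝ) + 1) * h := by linarith
    have hnn : (0:ℝ) ≤ (k:ℝ) * (((k:ℝ) + 1) * h - c) :=
      mul_nonneg hK0 (by linarith)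
    constructor
    · rw [hWFB, hWOB]
      have key : (c + (k:ℝ) * ((k:ℝ) + 1) * h) / ((k:ℝ) + 1)
          ≤ (c + 2 * (k:ℝ) * ((k:ℝ) + 1) * h) / (2 * (k:ℝ) + 1) := by
        rw [div_le_div_iff₀ hd1 hd2]; nlinarith
      linarith [key, e1, e2]
    · rw [hWOB, hWNB]
      have : c - (k:ℝ) * h ≤ c / ((k:ℝ) + 1) := by
        rw [le_div_iff₀ hd1]; nlinarith
      linarith
end

section
/- For h > 0 define k(h) := ⌊75/h⌋ ∈ ℕ and W(h) := 400 − 175/(k(h)+1) − k(h)·h. Then W(75/2) < W(38) and W(38) > W(50); in particular, since 75/2 < 38 < 50, the function h ↦ W(h) is neither nonincreasing nor nondecreasing on (0,∞), i.e., the equilibrium social welfare of the decentralized system is non-monotonic in the unit waiting cost. -/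
/-- Non-monotonicity of the decentralized equilibrium social welfare in the
unit waiting cost: with `k(h) = ⌊75/h⌋` and
`W(h) = 400 − 175/(k(h)+1) − k(h)·h` (parameters `p = q = 1/2`, `α = 1/5`,
payoffs `(800, 50, 50, 0)`), we have `W(75/2) < W(38)` and `W(38) > W(50)`;
in particular `W` is neither nonincreasing nor nondecreasing on `(0, ∞)`. -/
theorem decentralized_welfare_nonmonotone
    (k : ℝ → ℕ) (W : ℝ → ℝ)
    (hk : ∀ h : ℝ, k h = ⌊(75 : ℝ) / h⌋₊)
    (hW : ∀ h : ℝ, W h = 400 - 175 / ((k h : ℝ) + 1) - (k h : ℝ) * h) :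
    W (75 / 2) < W 38 ∧ W 50 < W 38 ∧
    ¬(∀ a b : ℝ, 0 < a → a ≤ b → W a ≤ W b) ∧
    ¬(∀ a b : ℝ, 0 < a → a ≤ b → W b ≤ W a) := by
  have k1 : k (75 / 2) = 2 := by
    rw [hk]
    rw [Nat.floor_eq_iff (by norm_num)]
    norm_num
  have k2 : k 38 = 1 := by
    rw [hk]
    rw [Nat.floor_eq_iff (by norm_num)]
    norm_num
  have k3 : k 50 = 1 := by
    rw [hk]
    rw [Nat.floor_eq_iff (by norm_num)]
    norm_num
  have w1 : W (75 / 2) = 400 - 175 / 3 - 75 := by rw [hW, k1]; norm_num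
  have w2 : W 38 = 400 - 175 / 2 - 38 := by rw [hW, k2]; norm_num
  have w3 : W 50 = 400 - 175 / 2 - 50 := by rw [hW, k3]; norm_num
  refine ⟨by rw [w1, w2]; norm_num, by rw [w2, w3]; norm_num, ?_, ?_⟩
  · intro H
    have := H 38 50 (by norm_num) (by norm_num)
    rw [w2, w3] at this; norm_num at this
  · intro H
    have := H (75 / 2) 38 (by norm_num) (by norm_num)
    rw [w1, w2] at this; norm_num at this
end
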